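/- For N≥3 self-adjoint operators A_1,…,A_N and unit vector ψ, the uncertainty relation Σ_i Var(A_i) ≥ (1/N)Var(Σ_i A_i) + (2/(N²(N−1)))(Σ_{i<j} Δ(A_i−A_j))² is equivalent to Σ_i Var(A_i) ≥ (1/(N−1))·Σ_{i<j}[⟨{A_i,A_j}⟩ − 2⟨A_i⟩⟨A_j⟩] + (2/((N−2)(N²−1)))·Σ_{(i,j)≠(i',j')} Δ(A_i−A_j)Δ(A_{i'}−A_{j'}), where the last sum is over ordered pairs of distinct index pairs. -/

import Mathlib

open scoped InnerProductSpace BigOperators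
open Finset

section Aux
variable {N : ℕ}

theorem aux_split_sum (f : Fin N × Fin N → ℝ) :
    ∑ p : Fin N × Fin N, f p =
      ∑ p ∈ univ.filter (fun p : Fin N × Fin N => p.1 < p.2), f p +
      ∑ p ∈ univ.filter (fun p : Fin N × Fin N => p.2 < p.1), f p +
      ∑ i : Fin N, f (i, i) := by
  rw [← Finset.sum_filter_add_sum_filter_not univ (fun p : Fin N × Fin N => p.1 < p.2),
    ← Finset.sum_filter_add_sum_filter_not (univ.filter (fun p : Fin N × Fin N => ¬ p.1 < p.2)) (fun p => p.2 < p.1),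
    Finset.filter_filter, Finset.filter_filter]
  have h1 : (univ.filter fun p : Fin N × Fin N => ¬p.1 < p.2 ∧ p.2 < p.1) =
      univ.filter (fun p : Fin N × Fin N => p.2 < p.1) := by
    ext p; simp; exact fun h => le_of_lt h
  have h2 : (univ.filter fun p : Fin N × Fin N => ¬p.1 < p.2 ∧ ¬p.2 < p.1) =
      univ.filter (fun p : Fin N × Fin N => p.1 = p.2) := by
    ext p; simp [not_lt, le_antisymm_iff, and_comm]
  have h3 : ∑ p ∈ univ.filter (fun p : Fin N × Fin N => p.1 = p.2), f p = ∑ i : Fin N, f (i, i) := by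
    refine Finset.sum_nbij' (fun p => p.1) (fun i => (i, i)) ?_ ?_ ?_ ?_ ?_
    all_goals try intro p hp
    all_goals simp_all
    all_goals try (obtain ⟨a,b⟩ := p; simp_all)
  rw [h1, h2, h3, add_assoc]

theorem aux_swap_sum (f : Fin N × Fin N → ℝ) :
    ∑ p ∈ univ.filter (fun p : Fin N × Fin N => p.2 < p.1), f p =
    ∑ p ∈ univ.filter (fun p : Fin N × Fin N => p.1 < p.2), f p.swap := by
  refine Finset.sum_nbij' Prod.swap Prod.swap ?_ ?_ ?_ ?_ ?_ <;> simp

theorem aux_sym_sum (x : Fin N → Fin N → ℝ) (hx : ∀ i j, x i j = x j i) :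
    ∑ i : Fin N, ∑ j : Fin N, x i j =
      ∑ i : Fin N, x i i +
      2 * ∑ p ∈ univ.filter (fun p : Fin N × Fin N => p.1 < p.2), x p.1 p.2 := by
  have hpt : ∑ p : Fin N × Fin N, x p.1 p.2 = ∑ i : Fin N, ∑ j : Fin N, x i j := by
    rw [← Finset.univ_product_univ, Finset.sum_product]
  have h := aux_split_sum (fun p : Fin N × Fin N => x p.1 p.2)
  rw [aux_swap_sum] at h
  simp only [Prod.fst_swap, Prod.snd_swap] at h
  have h2 : ∑ p ∈ univ.filter (fun p : Fin N × Fin N => p.1 < p.2), x p.2 p.1 =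
    ∑ p ∈ univ.filter (fun p : Fin N × Fin N => p.1 < p.2), x p.1 p.2 := by
    apply Finset.sum_congr rfl; intro p _; exact hx p.2 p.1
  rw [h2, hpt] at h
  linarith

theorem aux_pair_sum (v : Fin N → ℝ) :
    ∑ p ∈ univ.filter (fun p : Fin N × Fin N => p.1 < p.2), (v p.1 + v p.2) =
      ((N : ℝ) - 1) * ∑ i : Fin N, v i := by
  have h := aux_split_sum (fun p : Fin N × Fin N => v p.1)
  rw [aux_swap_sum] at h
  simp only [Prod.fst_swap] at h
  have hl : ∑ p : Fin N × Fin N, v p.1 = (N : ℝ) * ∑ i : Fin N, v i := by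
    have h1 : ∑ p : Fin N × Fin N, v p.1 = ∑ i : Fin N, ∑ _j : Fin N, v i := by
      rw [← Finset.univ_product_univ, Finset.sum_product]
    rw [h1]
    simp only [Finset.sum_const, card_univ, Fintype.card_fin, nsmul_eq_mul]
    rw [Finset.mul_sum]
  rw [hl] at h
  rw [Finset.sum_add_distrib]
  linarith

theorem aux_key (n S C P Q : ℝ) (h3 : 3 ≤ n) (hQ : Q = (n - 1) * S - C) :
    (S ≥ 1 / n * (S + C) + 2 / (n ^ 2 * (n - 1)) * P ^ 2) ↔
    (S ≥ 1 / (n - 1) * C + 2 / ((n - 2) * (n ^ 2 - 1)) * (P ^ 2 - Q)) := by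
  have h0 : (0:ℝ) < n := by linarith
  have h1 : (0:ℝ) < n - 1 := by linarith
  have h2 : (0:ℝ) < n - 2 := by linarith
  have h4 : (0:ℝ) < n + 1 := by linarith
  have e1 : n ≠ 0 := ne_of_gt h0
  have e2 : n - 1 ≠ 0 := ne_of_gt h1
  have e3 : n - 2 ≠ 0 := ne_of_gt h2
  have e4 : n + 1 ≠ 0 := ne_of_gt h4
  have e5 : n ^ 2 - 1 ≠ 0 := by
    have : n ^ 2 - 1 = (n - 1) * (n + 1) := by ring
    rw [this]; exact mul_ne_zero e2 e4
  have hk : (0:ℝ) < n ^ 2 / ((n - 2) * (n + 1)) := by positivity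
  have hid : S - (1 / (n - 1) * C + 2 / ((n - 2) * (n ^ 2 - 1)) * (P ^ 2 - Q)) =
      n ^ 2 / ((n - 2) * (n + 1)) *
        (S - (1 / n * (S + C) + 2 / (n ^ 2 * (n - 1)) * P ^ 2)) := by
    subst hQ
    field_simp
    ring
  constructor <;> intro h
  · have h' : 0 ≤ S - (1 / n * (S + C) + 2 / (n ^ 2 * (n - 1)) * P ^ 2) := by linarith
    have := mul_nonneg hk.le h'
    rw [← hid] at this
    linarith
  · have h' : 0 ≤ S - (1 / (n - 1) * C + 2 / ((n - 2) * (n ^ 2 - 1)) * (P ^ 2 - Q)) := by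
      linarith
    rw [hid] at h'
    nlinarith [hk]

end Aux

noncomputable def Var {H : Type*} [NormedAddCommGroup H] [InnerProductSpace ℂ H]
    (A : H →ₗ[ℂ] H) (ψ : H) : ℝ :=
  (⟪ψ, A (A ψ)⟫_ℂ).re - ((⟪ψ, A ψ⟫_ℂ).re) ^ 2

theorem var_nonneg {H : Type*} [NormedAddCommGroup H] [InnerProductSpace ℂ H]
    (B : H →ₗ[ℂ] H) (hB : B.IsSymmetric) (ψ : H) (hψ : ‖ψ‖ = 1) : 0 ≤ Var B ψ := by
  have h1 : (⟪ψ, B (B ψ)⟫_ℂ).re = ‖B ψ‖ ^ 2 := by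
    rw [← hB ψ (B ψ)]
    exact_mod_cast @inner_self_eq_norm_sq ℂ _ _ _ _ (B ψ)
  have h2 : |(⟪ψ, B ψ⟫_ℂ).re| ≤ ‖B ψ‖ := by
    calc |(⟪ψ, B ψ⟫_ℂ).re| ≤ ‖⟪ψ, B ψ⟫_ℂ‖ := Complex.abs_re_le_norm _
      _ ≤ ‖ψ‖ * ‖B ψ‖ := norm_inner_le_norm _ _
      _ = ‖B ψ‖ := by rw [hψ, one_mul]
  have h3 := abs_nonneg ((⟪ψ, B ψ⟫_ℂ).re)
  unfold Var
  nlinarith [sq_abs ((⟪ψ, B ψ⟫_ℂ).re)]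

theorem stmt_15 {H : Type*} [NormedAddCommGroup H] [InnerProductSpace ℂ H]
    [FiniteDimensional ℂ H] (N : ℕ) (hN : 3 ≤ N) (A : Fin N → H →ₗ[ℂ] H)
    (hA : ∀ i, (A i).IsSymmetric) (ψ : H) (hψ : ‖ψ‖ = 1) :
    (∑ i : Fin N, Var (A i) ψ ≥
        (1 / (N : ℝ)) * Var (∑ i : Fin N, A i) ψ +
          (2 / ((N : ℝ) ^ 2 * (N - 1))) *
            (∑ p ∈ Finset.univ.filter (fun p : Fin N × Fin N => p.1 < p.2),
              Real.sqrt (Var (A p.1 - A p.2) ψ)) ^ 2)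
      ↔ (∑ i : Fin N, Var (A i) ψ ≥
          (1 / ((N : ℝ) - 1)) *
            ∑ p ∈ Finset.univ.filter (fun p : Fin N × Fin N => p.1 < p.2),
              ((⟪ψ, (A p.1 ∘ₗ A p.2 + A p.2 ∘ₗ A p.1) ψ⟫_ℂ).re -
                2 * (⟪ψ, A p.1 ψ⟫_ℂ).re * (⟪ψ, A p.2 ψ⟫_ℂ).re) +
          (2 / (((N : ℝ) - 2) * ((N : ℝ) ^ 2 - 1))) *
            ∑ p ∈ Finset.univ.filter (fun p : Fin N × Fin N => p.1 < p.2),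
              ∑ q ∈ Finset.univ.filter
                  (fun q : Fin N × Fin N => q.1 < q.2 ∧ q ≠ p),
                Real.sqrt (Var (A p.1 - A p.2) ψ) *
                  Real.sqrt (Var (A q.1 - A q.2) ψ)) := by
  classical
  set s : Finset (Fin N × Fin N) := univ.filter (fun p : Fin N × Fin N => p.1 < p.2) with hs
  -- abbreviations (plain reals)
  let e : Fin N → ℝ := fun i => (⟪ψ, A i ψ⟫_ℂ).re
  let m : Fin N → Fin N → ℝ := fun i j => (⟪ψ, A i (A j ψ)⟫_ℂ).re
  have hm_symm : ∀ i j, m i j = m j i := by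
    intro i j
    show (⟪ψ, A i (A j ψ)⟫_ℂ).re = (⟪ψ, A j (A i ψ)⟫_ℂ).re
    rw [← hA i ψ (A j ψ), ← hA j ψ (A i ψ), ← inner_conj_symm (A i ψ) (A j ψ),
      Complex.conj_re]
  let S : ℝ := ∑ i : Fin N, Var (A i) ψ
  let t : Fin N × Fin N → ℝ := fun p =>
    (⟪ψ, (A p.1 ∘ₗ A p.2 + A p.2 ∘ₗ A p.1) ψ⟫_ℂ).re - 2 * e p.1 * e p.2
  have ht_eq : ∀ p : Fin N × Fin N, t p = m p.1 p.2 + m p.2 p.1 - 2 * e p.1 * e p.2 := by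
    intro p
    show (⟪ψ, (A p.1 ∘ₗ A p.2 + A p.2 ∘ₗ A p.1) ψ⟫_ℂ).re - 2 * e p.1 * e p.2 = _
    simp only [LinearMap.add_apply, LinearMap.comp_apply, inner_add_right, Complex.add_re]
    rfl
  let C : ℝ := ∑ p ∈ s, t p
  let d : Fin N × Fin N → ℝ := fun p => Real.sqrt (Var (A p.1 - A p.2) ψ)
  let P : ℝ := ∑ p ∈ s, d p
  let Q : ℝ := ∑ p ∈ s, (d p) ^ 2
  have hvar_i : ∀ i, Var (A i) ψ = m i i - (e i) ^ 2 := fun i => rfl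
  have hvdiff : ∀ p : Fin N × Fin N,
      Var (A p.1 - A p.2) ψ = Var (A p.1) ψ + Var (A p.2) ψ - t p := by
    intro p
    have expand : Var (A p.1 - A p.2) ψ =
        m p.1 p.1 - m p.2 p.1 - (m p.1 p.2 - m p.2 p.2) - (e p.1 - e p.2) ^ 2 := by
      show (⟪ψ, (A p.1 - A p.2) ((A p.1 - A p.2) ψ)⟫_ℂ).re -
          ((⟪ψ, (A p.1 - A p.2) ψ⟫_ℂ).re) ^ 2 = _
      simp only [LinearMap.sub_apply, map_sub, inner_sub_right, Complex.sub_re]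
      rfl
    rw [expand, ht_eq, hvar_i, hvar_i]
    ring
  have hd_sq : ∀ p : Fin N × Fin N, (d p) ^ 2 = Var (A p.1 - A p.2) ψ := fun p =>
    Real.sq_sqrt (var_nonneg _ ((hA p.1).sub (hA p.2)) ψ hψ)
  have hQ : Q = ((N : ℝ) - 1) * S - C := by
    show ∑ p ∈ s, (d p) ^ 2 = _
    calc ∑ p ∈ s, (d p) ^ 2
        = ∑ p ∈ s, ((Var (A p.1) ψ + Var (A p.2) ψ) - t p) := by
          apply Finset.sum_congr rfl; intro p _; rw [hd_sq, hvdiff]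
      _ = (∑ p ∈ s, (Var (A p.1) ψ + Var (A p.2) ψ)) - C := Finset.sum_sub_distrib _ _
      _ = ((N : ℝ) - 1) * S - C := by rw [hs, aux_pair_sum (fun i => Var (A i) ψ)]
  -- Var of the sum
  have hVarSum : Var (∑ i : Fin N, A i) ψ = S + C := by
    have h1 : (⟪ψ, (∑ i : Fin N, A i) ((∑ i : Fin N, A i) ψ)⟫_ℂ).re =
        ∑ i : Fin N, ∑ j : Fin N, m i j := by
      simp only [LinearMap.sum_apply, map_sum, inner_sum, Complex.re_sum]
      exact Finset.sum_comm
    have h2 : (⟪ψ, (∑ i : Fin N, A i) ψ⟫_ℂ).re = ∑ i : Fin N, e i := by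
      simp only [LinearMap.sum_apply, inner_sum, Complex.re_sum]
      rfl
    have h3 : (∑ i : Fin N, e i) ^ 2 = ∑ i : Fin N, ∑ j : Fin N, e i * e j := by
      rw [sq, Finset.sum_mul_sum]
    have h4 : C = 2 * ∑ p ∈ s, (m p.1 p.2 - e p.1 * e p.2) := by
      show ∑ p ∈ s, t p = _
      rw [Finset.mul_sum]
      apply Finset.sum_congr rfl
      intro p hp
      rw [ht_eq, hm_symm p.2 p.1]; ring
    have h5 : S = ∑ i : Fin N, m i i - ∑ i : Fin N, (e i) * (e i) := by
      show ∑ i : Fin N, Var (A i) ψ = _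
      rw [← Finset.sum_sub_distrib]
      apply Finset.sum_congr rfl
      intro i _
      rw [hvar_i]; ring
    have h6 : ∑ p ∈ s, (m p.1 p.2 - e p.1 * e p.2) =
        ∑ p ∈ s, m p.1 p.2 - ∑ p ∈ s, e p.1 * e p.2 := Finset.sum_sub_distrib _ _
    show (⟪ψ, (∑ i : Fin N, A i) ((∑ i : Fin N, A i) ψ)⟫_ℂ).re -
        ((⟪ψ, (∑ i : Fin N, A i) ψ⟫_ℂ).re) ^ 2 = S + C
    rw [h1, h2, h3, hs] at *
    rw [aux_sym_sum m hm_symm, aux_sym_sum (fun i j => e i * e j) (fun i j => mul_comm _ _)]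
    rw [h4, h6, h5]
    ring
  -- double sum
  have hD : (∑ p ∈ s, ∑ q ∈ univ.filter (fun q : Fin N × Fin N => q.1 < q.2 ∧ q ≠ p),
      d p * d q) = P ^ 2 - Q := by
    have hfil : ∀ p : Fin N × Fin N,
        univ.filter (fun q : Fin N × Fin N => q.1 < q.2 ∧ q ≠ p) = s.erase p := by
      intro p; ext q; simp [hs, Finset.mem_erase, and_comm]
    have step1 : (∑ p ∈ s, ∑ q ∈ univ.filter (fun q : Fin N × Fin N => q.1 < q.2 ∧ q ≠ p),
        d p * d q) = ∑ p ∈ s, d p * (P - d p) := by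
      apply Finset.sum_congr rfl
      intro p hp
      rw [hfil, ← Finset.mul_sum, Finset.sum_erase_eq_sub hp]
    have step2 : ∑ p ∈ s, d p * (P - d p) = ∑ p ∈ s, (d p * P - (d p) ^ 2) := by
      apply Finset.sum_congr rfl; intro p _; ring
    rw [step1, step2, Finset.sum_sub_distrib, ← Finset.sum_mul]
    show P * P - Q = P ^ 2 - Q
    ring
  have hn3 : (3:ℝ) ≤ (N : ℝ) := by exact_mod_cast hN
  have hkey := aux_key (N : ℝ) S C P Q hn3 hQ
  -- rewrite goal pieces
  have hCr : (∑ p ∈ s, ((⟪ψ, (A p.1 ∘ₗ A p.2 + A p.2 ∘ₗ A p.1) ψ⟫_ℂ).re -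
      2 * (⟪ψ, A p.1 ψ⟫_ℂ).re * (⟪ψ, A p.2 ψ⟫_ℂ).re)) = C := rfl
  have hPr : (∑ p ∈ s, Real.sqrt (Var (A p.1 - A p.2) ψ)) = P := rfl
  have hDr : (∑ p ∈ s, ∑ q ∈ univ.filter (fun q : Fin N × Fin N => q.1 < q.2 ∧ q ≠ p),
      Real.sqrt (Var (A p.1 - A p.2) ψ) * Real.sqrt (Var (A q.1 - A q.2) ψ)) = P ^ 2 - Q := hD
  rw [hVarSum, hCr, hPr, hDr]
  convert hkey using 3 <;> ring
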